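/- Let B = (1/2) Σ T_{ijk}(λ_+^j λ_+^i λ_-^k + λ_+^k λ_-^i λ_-^j) on the exterior algebra Λ(ℂ^n), with T_{ijk} = −T_{jik}. Then Tr(γ^a γ^b γ^c B) = i 2^{n−2}(T_{abc} + T_{cab} + T_{bca}), where γ^p = −i(λ_+^p − λ_-^p). -/
import Mathlib


open Matrix BigOperators

/-- Exterior multiplication by the basis vector `e^p` on the exterior algebra
`Λ(ℂ^n)`, realized as a matrix on the basis of `Λ(ℂ^n)` indexed by subsets of
`{1,...,n}`, with the standard sign `ε^I_{pJ}`. -/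
noncomputable def lamP (n : ℕ) (p : Fin n) :
    Matrix (Finset (Fin n)) (Finset (Fin n)) ℂ :=
  fun I J => if p ∉ J ∧ I = insert p J then (-1 : ℂ) ^ (J.filter (· < p)).card else 0

/-- The contraction (interior product) with `e_p`: the adjoint of `lamP n p`. -/
noncomputable def lamM (n : ℕ) (p : Fin n) :
    Matrix (Finset (Fin n)) (Finset (Fin n)) ℂ :=
  (lamP n p)ᴴ

/-- `γ^p = -i (λ_+^p - λ_-^p)`. -/
noncomputable def gam (n : ℕ) (p : Fin n) : Matrix (Finset (Fin n)) (Finset (Fin n)) ℂ :=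
  (-Complex.I) • (lamP n p - lamM n p)

/-- `γ̃^p = λ_+^p + λ_-^p`. -/
noncomputable def gamT (n : ℕ) (p : Fin n) : Matrix (Finset (Fin n)) (Finset (Fin n)) ℂ :=
  lamP n p + lamM n p

namespace Car
variable {n : ℕ}
noncomputable def sgn (S : Finset (Fin n)) (p : Fin n) : ℂ := (-1) ^ (S.filter (· < p)).card
lemma lamP_apply (p : Fin n) (I J : Finset (Fin n)) :
    lamP n p I J = if p ∉ J ∧ I = insert p J then sgn J p else 0 := rfl
lemma lamM_apply (p : Fin n) (I J : Finset (Fin n)) :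
    lamM n p I J = if p ∉ I ∧ J = insert p I then sgn I p else 0 := by
  simp only [lamM, conjTranspose_apply, lamP_apply, sgn]
  split_ifs <;> simp
lemma sgn_insert (S : Finset (Fin n)) (p q : Fin n) (h : q ∉ S) :
    sgn (insert q S) p = (if q < p then -1 else 1) * sgn S p := by
  unfold sgn
  rw [Finset.filter_insert]
  split_ifs with h1
  · rw [Finset.card_insert_of_notMem (by simp [h]), pow_succ]; ring
  · ring

lemma mulPP (p q : Fin n) (I J : Finset (Fin n)) :
    (lamP n p * lamP n q) I J = lamP n p I (insert q J) * lamP n q (insert q J) J := by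
  rw [Matrix.mul_apply, Finset.sum_eq_single (insert q J)]
  · intro K _ hK
    rw [lamP_apply q K J]
    split_ifs with h
    · exact absurd h.2 hK
    · simp
  · simp

lemma mulPM (p q : Fin n) (I J : Finset (Fin n)) :
    (lamP n p * lamM n q) I J =
      lamP n p I (J.erase q) * lamM n q (J.erase q) J := by
  rw [Matrix.mul_apply, Finset.sum_eq_single (J.erase q)]
  · intro K _ hK
    rw [lamM_apply q K J]
    split_ifs with h
    · exact absurd (by rw [h.2, Finset.erase_insert h.1] : K = J.erase q) hK
    · simp
  · simp

lemma mulMP (p q : Fin n) (I J : Finset (Fin n)) :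
    (lamM n q * lamP n p) I J =
      lamM n q I (insert p J) * lamP n p (insert p J) J := by
  rw [Matrix.mul_apply, Finset.sum_eq_single (insert p J)]
  · intro K _ hK
    rw [lamP_apply p K J]
    split_ifs with h
    · exact absurd h.2 hK
    · simp
  · simp

end Car


namespace Car2
open Car
variable {n : ℕ}

lemma sgn_sq (S : Finset (Fin n)) (p : Fin n) : sgn S p * sgn S p = 1 := by
  unfold sgn
  rw [← pow_add, ← two_mul, pow_mul]
  norm_num

lemma L1 (p q : Fin n) : lamP n p * lamP n q + lamP n q * lamP n p = 0 := by
  ext I J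
  rw [Matrix.add_apply, mulPP p q, mulPP q p, Matrix.zero_apply,
      lamP_apply, lamP_apply, lamP_apply, lamP_apply]
  by_cases hpq : p = q
  · simp [hpq]
  by_cases hp : p ∈ J
  · simp [Finset.mem_insert, hp]
  by_cases hq : q ∈ J
  · simp [Finset.mem_insert, hq]
  by_cases hI : I = insert p (insert q J)
  · have c1 : p ∉ insert q J ∧ I = insert p (insert q J) := ⟨by simp [hp, hpq], hI⟩
    have c2 : q ∉ J ∧ insert q J = insert q J := ⟨hq, rfl⟩
    have hqp : ¬ q = p := fun h => hpq h.symm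
    have c3 : q ∉ insert p J ∧ I = insert q (insert p J) :=
      ⟨by simp [hq, hqp], by rw [hI, Finset.insert_comm]⟩
    have c4 : p ∉ J ∧ insert p J = insert p J := ⟨hp, rfl⟩
    rw [if_pos c1, if_pos c2, if_pos c3, if_pos c4,
        sgn_insert _ _ _ hq, sgn_insert _ _ _ hp]
    rcases lt_or_gt_of_ne hpq with h | h
    · rw [if_neg (asymm h), if_pos h]; ring
    · rw [if_pos h, if_neg (asymm h)]; ring
  · have hI' : I ≠ insert q (insert p J) := by rw [Finset.insert_comm]; exact hI
    simp [hI, hI']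

lemma L2 (p q : Fin n) : lamM n p * lamM n q + lamM n q * lamM n p = 0 := by
  have h := congrArg Matrix.conjTranspose (L1 q p)
  simpa [Matrix.conjTranspose_add, Matrix.conjTranspose_mul, lamM] using h

lemma L3 (p q : Fin n) :
    lamP n p * lamM n q + lamM n q * lamP n p = (if p = q then (1:ℂ) else 0) • 1 := by
  ext I J
  rw [Matrix.add_apply, mulPM p q, mulMP p q,
      lamP_apply, lamM_apply, lamM_apply, lamP_apply,
      Matrix.smul_apply, Matrix.one_apply, smul_eq_mul]
  by_cases hpq : p = q
  · subst hpq
    rw [if_pos rfl, one_mul]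
    by_cases hpJ : p ∈ J
    · have c2 : p ∉ J.erase p ∧ J = insert p (J.erase p) :=
        ⟨Finset.notMem_erase _ _, (Finset.insert_erase hpJ).symm⟩
      have z4 : ¬ (p ∉ J ∧ insert p J = insert p J) := fun h => h.1 hpJ
      rw [if_pos c2, if_neg z4, mul_zero, add_zero]
      by_cases hIJ : I = J
      · have c1 : p ∉ J.erase p ∧ I = insert p (J.erase p) :=
          ⟨Finset.notMem_erase _ _, by rw [hIJ, Finset.insert_erase hpJ]⟩
        rw [if_pos c1, if_pos hIJ, sgn_sq]
      · have c1 : ¬ (p ∉ J.erase p ∧ I = insert p (J.erase p)) := by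
          rintro ⟨-, h⟩
          exact hIJ (by rw [h, Finset.insert_erase hpJ])
        rw [if_neg c1, if_neg hIJ, zero_mul]
    · have z2 : ¬ (p ∉ J.erase p ∧ J = insert p (J.erase p)) := by
        rintro ⟨-, h⟩; exact hpJ (h ▸ Finset.mem_insert_self p _)
      rw [if_neg z2, mul_zero, zero_add]
      by_cases hIJ : I = J
      · have c3 : p ∉ I ∧ insert p J = insert p I := by
          constructor
          · rw [hIJ]; exact hpJ
          · rw [hIJ]
        have c4 : p ∉ J ∧ insert p J = insert p J := ⟨hpJ, rfl⟩
        rw [if_pos c3, if_pos c4, if_pos hIJ, hIJ, sgn_sq]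
      · have c3 : ¬ (p ∉ I ∧ insert p J = insert p I) := by
          rintro ⟨hpI, h⟩
          apply hIJ
          have : J = I := by rw [← Finset.erase_insert hpI, ← h, Finset.erase_insert hpJ]
          exact this.symm
        rw [if_neg c3, zero_mul, if_neg hIJ]
  · rw [if_neg hpq, zero_mul]
    by_cases hC : q ∈ J ∧ p ∉ J ∧ I = insert p (J.erase q)
    · obtain ⟨hqJ, hpJ, hI⟩ := hC
      have hpe : p ∉ J.erase q := fun h => hpJ (Finset.mem_of_mem_erase h)
      have c1 : p ∉ J.erase q ∧ I = insert p (J.erase q) := ⟨hpe, hI⟩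
      have c2 : q ∉ J.erase q ∧ J = insert q (J.erase q) :=
        ⟨Finset.notMem_erase _ _, (Finset.insert_erase hqJ).symm⟩
      have c3 : q ∉ I ∧ insert p J = insert q I := by
        constructor
        · have hqp : ¬ q = p := fun h => hpq h.symm
          rw [hI]
          simp [Finset.mem_insert, hqp, Finset.notMem_erase]
        · rw [hI, Finset.insert_comm, Finset.insert_erase hqJ]
      have c4 : p ∉ J ∧ insert p J = insert p J := ⟨hpJ, rfl⟩
      rw [if_pos c1, if_pos c2, if_pos c3, if_pos c4]
      have e1 : sgn I q = (if p < q then (-1:ℂ) else 1) * sgn (J.erase q) q := by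
        rw [hI, sgn_insert _ _ _ hpe]
      have e2 : sgn J p = (if q < p then (-1:ℂ) else 1) * sgn (J.erase q) p := by
        conv_lhs => rw [c2.2]
        rw [sgn_insert _ _ _ (Finset.notMem_erase _ _)]
      rw [e1, e2]
      rcases lt_or_gt_of_ne hpq with h | h
      · rw [if_pos h, if_neg (asymm h)]; ring
      · rw [if_neg (asymm h), if_pos h]; ring
    · have z1 : ¬ ((p ∉ J.erase q ∧ I = insert p (J.erase q)) ∧
          (q ∉ J.erase q ∧ J = insert q (J.erase q))) := by
        rintro ⟨⟨hp, hI⟩, -, hJ⟩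
        refine hC ⟨hJ ▸ Finset.mem_insert_self q _, ?_, hI⟩
        intro hpJ
        exact hp (Finset.mem_erase.2 ⟨hpq, hpJ⟩)
      have z2 : ¬ ((q ∉ I ∧ insert p J = insert q I) ∧ (p ∉ J ∧ insert p J = insert p J)) := by
        rintro ⟨⟨hqI, hJI⟩, hpJ, -⟩
        have hqJ : q ∈ J := by
          have hmem : q ∈ insert p J := hJI ▸ Finset.mem_insert_self q I
          rcases Finset.mem_insert.1 hmem with h | h
          · exact absurd h.symm hpq
          · exact h
        have hI : I = insert p (J.erase q) := by
          have h0 : I = (insert q I).erase q := (Finset.erase_insert hqI).symm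
          rw [h0, ← hJI, Finset.erase_insert_of_ne hpq]
        exact hC ⟨hqJ, hpJ, hI⟩
      have t1z : (if p ∉ J.erase q ∧ I = insert p (J.erase q) then sgn (J.erase q) p else 0) *
          (if q ∉ J.erase q ∧ J = insert q (J.erase q) then sgn (J.erase q) q else 0) = 0 := by
        by_cases h1 : p ∉ J.erase q ∧ I = insert p (J.erase q)
        · by_cases h2 : q ∉ J.erase q ∧ J = insert q (J.erase q)
          · exact absurd ⟨h1, h2⟩ z1
          · rw [if_neg h2, mul_zero]
        · rw [if_neg h1, zero_mul]
      have t2z : (if q ∉ I ∧ insert p J = insert q I then sgn I q else 0) *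
          (if p ∉ J ∧ insert p J = insert p J then sgn J p else 0) = 0 := by
        by_cases h3 : q ∉ I ∧ insert p J = insert q I
        · by_cases h4 : p ∉ J ∧ insert p J = insert p J
          · exact absurd ⟨h3, h4⟩ z2
          · rw [if_neg h4, mul_zero]
        · rw [if_neg h3, zero_mul]
      rw [t1z, t2z, add_zero]

end Car2


namespace Car3
open Car Car2
variable {n : ℕ}

noncomputable def dd (p q : Fin n) : ℂ := if p = q then 1 else 0

lemma dd_comm (p q : Fin n) : dd p q = dd q p := by
  unfold dd
  by_cases h : p = q
  · simp [h]
  · rw [if_neg h, if_neg (fun h' => h h'.symm)]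

lemma L3' (p q : Fin n) :
    lamP n p * lamM n q + lamM n q * lamP n p = dd p q • 1 := L3 p q

lemma PPzero (p q : Fin n) :
    lamP n p * lamP n q + lamP n q * lamP n p = (0:ℂ) • 1 := by
  rw [L1, zero_smul]

lemma MMzero (p q : Fin n) :
    lamM n p * lamM n q + lamM n q * lamM n p = (0:ℂ) • 1 := by
  rw [L2, zero_smul]

lemma G1 (p q : Fin n) :
    gam n p * gam n q + gam n q * gam n p = (2 * dd p q) • 1 := by
  have key : gam n p * gam n q + gam n q * gam n p =
      ((-Complex.I) * (-Complex.I)) • ((lamP n p * lamP n q + lamP n q * lamP n p)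
        + (lamM n p * lamM n q + lamM n q * lamM n p)
        - ((lamP n p * lamM n q + lamM n q * lamP n p)
          + (lamP n q * lamM n p + lamM n p * lamP n q))) := by
    simp only [gam, smul_mul_assoc, mul_smul_comm, smul_smul, sub_mul, mul_sub]
    module
  rw [key, L1, L2, L3', L3', dd_comm q p,
    show ((-Complex.I) * (-Complex.I)) = (-1:ℂ) by rw [neg_mul_neg, Complex.I_mul_I]]
  module

lemma G2 (p q : Fin n) :
    gam n p * lamP n q + lamP n q * gam n p = (Complex.I * dd p q) • 1 := by
  have key : gam n p * lamP n q + lamP n q * gam n p =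
      (-Complex.I) • ((lamP n p * lamP n q + lamP n q * lamP n p)
        - (lamP n q * lamM n p + lamM n p * lamP n q)) := by
    simp only [gam, smul_mul_assoc, mul_smul_comm, sub_mul, mul_sub]
    module
  rw [key, L1, L3', dd_comm q p]
  module

lemma G3 (p q : Fin n) :
    gam n p * lamM n q + lamM n q * gam n p = (-Complex.I * dd p q) • 1 := by
  have key : gam n p * lamM n q + lamM n q * gam n p =
      (-Complex.I) • ((lamP n p * lamM n q + lamM n q * lamP n p)
        - (lamM n p * lamM n q + lamM n q * lamM n p)) := by
    simp only [gam, smul_mul_assoc, mul_smul_comm, sub_mul, mul_sub]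
    module
  rw [key, L2, L3']
  module

abbrev Mtx (n : ℕ) := Matrix (Finset (Fin n)) (Finset (Fin n)) ℂ

lemma trace_one' : Matrix.trace (1 : Mtx n) = (2:ℂ)^n := by
  rw [Matrix.trace_one]
  simp [Fintype.card_finset]

lemma tr2 (X Y : Mtx n) (c : ℂ) (h : X*Y + Y*X = c • 1) :
    2 * Matrix.trace (X*Y) = c * 2^n := by
  have h' := congrArg Matrix.trace h
  rw [Matrix.trace_add, Matrix.trace_smul, trace_one', Matrix.trace_mul_comm Y X,
      smul_eq_mul] at h'
  linear_combination h'

lemma tr4 (X1 X2 X3 X4 : Mtx n) (c12 c13 c14 : ℂ)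
    (h12 : X1*X2 + X2*X1 = c12 • 1) (h13 : X1*X3 + X3*X1 = c13 • 1)
    (h14 : X1*X4 + X4*X1 = c14 • 1) :
    2 * Matrix.trace (X1*X2*X3*X4) =
      c12 * Matrix.trace (X3*X4) - c13 * Matrix.trace (X2*X4)
        + c14 * Matrix.trace (X2*X3) := by
  have e12 : X1*X2 = c12 • 1 - X2*X1 := eq_sub_of_add_eq h12
  have e13 : X1*X3 = c13 • 1 - X3*X1 := eq_sub_of_add_eq h13
  have e14 : X1*X4 = c14 • 1 - X4*X1 := eq_sub_of_add_eq h14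
  have s12 : ∀ R : Mtx n, X1*(X2*R) = c12 • R - X2*(X1*R) := by
    intro R
    rw [← Matrix.mul_assoc, e12, Matrix.sub_mul, smul_mul_assoc, one_mul, Matrix.mul_assoc]
  have s13 : ∀ R : Mtx n, X1*(X3*R) = c13 • R - X3*(X1*R) := by
    intro R
    rw [← Matrix.mul_assoc, e13, Matrix.sub_mul, smul_mul_assoc, one_mul, Matrix.mul_assoc]
  have key : X1*(X2*(X3*X4)) =
      c12 • (X3*X4) - X2*(c13 • X4 - X3*(c14 • 1 - X4*X1)) := by
    rw [s12, s13, e14]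
  have h' := congrArg Matrix.trace key
  simp only [Matrix.mul_sub, mul_smul_comm, Matrix.mul_one, Matrix.trace_sub,
    Matrix.trace_smul, smul_eq_mul] at h'
  have cyc : Matrix.trace (X2*(X3*(X4*X1))) = Matrix.trace (X1*(X2*(X3*X4))) := by
    rw [show X2*(X3*(X4*X1)) = (X2*(X3*X4))*X1 by simp only [Matrix.mul_assoc],
      Matrix.trace_mul_comm]
  rw [cyc] at h'
  simp only [Matrix.mul_assoc]
  linear_combination h'

lemma tr6 (X1 X2 X3 X4 X5 X6 : Mtx n) (c12 c13 c14 c15 c16 : ℂ)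
    (h12 : X1*X2 + X2*X1 = c12 • 1) (h13 : X1*X3 + X3*X1 = c13 • 1)
    (h14 : X1*X4 + X4*X1 = c14 • 1) (h15 : X1*X5 + X5*X1 = c15 • 1)
    (h16 : X1*X6 + X6*X1 = c16 • 1) :
    2 * Matrix.trace (X1*X2*X3*X4*X5*X6) =
      c12 * Matrix.trace (X3*X4*X5*X6) - c13 * Matrix.trace (X2*X4*X5*X6)
        + c14 * Matrix.trace (X2*X3*X5*X6) - c15 * Matrix.trace (X2*X3*X4*X6)
        + c16 * Matrix.trace (X2*X3*X4*X5) := by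
  have e16 : X1*X6 = c16 • 1 - X6*X1 := eq_sub_of_add_eq h16
  have s12 : ∀ R : Mtx n, X1*(X2*R) = c12 • R - X2*(X1*R) := by
    intro R
    rw [← Matrix.mul_assoc, eq_sub_of_add_eq h12, Matrix.sub_mul, smul_mul_assoc,
      one_mul, Matrix.mul_assoc]
  have s13 : ∀ R : Mtx n, X1*(X3*R) = c13 • R - X3*(X1*R) := by
    intro R
    rw [← Matrix.mul_assoc, eq_sub_of_add_eq h13, Matrix.sub_mul, smul_mul_assoc,
      one_mul, Matrix.mul_assoc]
  have s14 : ∀ R : Mtx n, X1*(X4*R) = c14 • R - X4*(X1*R) := by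
    intro R
    rw [← Matrix.mul_assoc, eq_sub_of_add_eq h14, Matrix.sub_mul, smul_mul_assoc,
      one_mul, Matrix.mul_assoc]
  have s15 : ∀ R : Mtx n, X1*(X5*R) = c15 • R - X5*(X1*R) := by
    intro R
    rw [← Matrix.mul_assoc, eq_sub_of_add_eq h15, Matrix.sub_mul, smul_mul_assoc,
      one_mul, Matrix.mul_assoc]
  have key : X1*(X2*(X3*(X4*(X5*X6)))) =
      c12 • (X3*(X4*(X5*X6)))
        - X2*(c13 • (X4*(X5*X6))
          - X3*(c14 • (X5*X6) - X4*(c15 • X6 - X5*(c16 • 1 - X6*X1)))) := by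
    rw [s12, s13, s14, s15, e16]
  have h' := congrArg Matrix.trace key
  simp only [Matrix.mul_sub, mul_smul_comm, Matrix.mul_one, Matrix.trace_sub,
    Matrix.trace_smul, smul_eq_mul] at h'
  have cyc : Matrix.trace (X2*(X3*(X4*(X5*(X6*X1))))) =
      Matrix.trace (X1*(X2*(X3*(X4*(X5*X6))))) := by
    rw [show X2*(X3*(X4*(X5*(X6*X1)))) = (X2*(X3*(X4*(X5*X6))))*X1 by
        simp only [Matrix.mul_assoc],
      Matrix.trace_mul_comm]
  rw [cyc] at h'
  simp only [Matrix.mul_assoc]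
  linear_combination h'

end Car3


namespace Car4
open Car Car2 Car3
variable {n : ℕ}
open Complex (I)

lemma vPQ (x y : Fin n) : Matrix.trace (lamP n x * lamM n y) = dd x y * 2^n/2 := by
  linear_combination (tr2 _ _ _ (L3' x y))/2

lemma vPP (x y : Fin n) : Matrix.trace (lamP n x * lamP n y) = 0 := by
  linear_combination (tr2 _ _ _ (PPzero x y))/2

lemma vQQ (x y : Fin n) : Matrix.trace (lamM n x * lamM n y) = 0 := by
  linear_combination (tr2 _ _ _ (MMzero x y))/2

lemma vGP (x y : Fin n) : Matrix.trace (gam n x * lamP n y) = I*dd x y*2^n/2 := by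
  linear_combination (tr2 _ _ _ (G2 x y))/2

lemma vGQ (x y : Fin n) : Matrix.trace (gam n x * lamM n y) = -I*dd x y*2^n/2 := by
  linear_combination (tr2 _ _ _ (G3 x y))/2

lemma htA (a b c i j k : Fin n) :
    Matrix.trace (gam n a * gam n b * gam n c * (lamP n j * lamP n i * lamM n k)) =
    ((2*dd a b) * (((I*dd c j)*(dd i k*2^n/2) - (I*dd c i)*(dd j k*2^n/2) + (-I*dd c k)*0)/2)
     - (2*dd a c) * (((I*dd b j)*(dd i k*2^n/2) - (I*dd b i)*(dd j k*2^n/2) + (-I*dd b k)*0)/2)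
     + (I*dd a j) * (((2*dd b c)*(dd i k*2^n/2) - (I*dd b i)*(-I*dd c k*2^n/2) + (-I*dd b k)*(I*dd c i*2^n/2))/2)
     - (I*dd a i) * (((2*dd b c)*(dd j k*2^n/2) - (I*dd b j)*(-I*dd c k*2^n/2) + (-I*dd b k)*(I*dd c j*2^n/2))/2)
     + (-I*dd a k) * (((2*dd b c)*0 - (I*dd b j)*(I*dd c i*2^n/2) + (I*dd b i)*(I*dd c j*2^n/2))/2))/2 := by
  have u1 : Matrix.trace (gam n c * lamP n j * lamP n i * lamM n k)
      = ((I*dd c j)*(dd i k*2^n/2) - (I*dd c i)*(dd j k*2^n/2) + (-I*dd c k)*0)/2 := by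
    linear_combination (tr4 _ _ _ _ _ _ _ (G2 c j) (G2 c i) (G3 c k))/2
      + (I*dd c j/2)*(vPQ i k) - (I*dd c i/2)*(vPQ j k) + (-I*dd c k/2)*(vPP j i)
  have u2 : Matrix.trace (gam n b * lamP n j * lamP n i * lamM n k)
      = ((I*dd b j)*(dd i k*2^n/2) - (I*dd b i)*(dd j k*2^n/2) + (-I*dd b k)*0)/2 := by
    linear_combination (tr4 _ _ _ _ _ _ _ (G2 b j) (G2 b i) (G3 b k))/2
      + (I*dd b j/2)*(vPQ i k) - (I*dd b i/2)*(vPQ j k) + (-I*dd b k/2)*(vPP j i)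
  have u3 : Matrix.trace (gam n b * gam n c * lamP n i * lamM n k)
      = ((2*dd b c)*(dd i k*2^n/2) - (I*dd b i)*(-I*dd c k*2^n/2) + (-I*dd b k)*(I*dd c i*2^n/2))/2 := by
    linear_combination (tr4 _ _ _ _ _ _ _ (G1 b c) (G2 b i) (G3 b k))/2
      + (2*dd b c/2)*(vPQ i k) - (I*dd b i/2)*(vGQ c k) + (-I*dd b k/2)*(vGP c i)
  have u4 : Matrix.trace (gam n b * gam n c * lamP n j * lamM n k)
      = ((2*dd b c)*(dd j k*2^n/2) - (I*dd b j)*(-I*dd c k*2^n/2) + (-I*dd b k)*(I*dd c j*2^n/2))/2 := by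
    linear_combination (tr4 _ _ _ _ _ _ _ (G1 b c) (G2 b j) (G3 b k))/2
      + (2*dd b c/2)*(vPQ j k) - (I*dd b j/2)*(vGQ c k) + (-I*dd b k/2)*(vGP c j)
  have u5 : Matrix.trace (gam n b * gam n c * lamP n j * lamP n i)
      = ((2*dd b c)*0 - (I*dd b j)*(I*dd c i*2^n/2) + (I*dd b i)*(I*dd c j*2^n/2))/2 := by
    linear_combination (tr4 _ _ _ _ _ _ _ (G1 b c) (G2 b j) (G2 b i))/2
      + (2*dd b c/2)*(vPP j i) - (I*dd b j/2)*(vGP c i) + (I*dd b i/2)*(vGP c j)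
  have h6 := tr6 (gam n a) (gam n b) (gam n c) (lamP n j) (lamP n i) (lamM n k)
    _ _ _ _ _ (G1 a b) (G1 a c) (G2 a j) (G2 a i) (G3 a k)
  simp only [Matrix.mul_assoc] at h6 u1 u2 u3 u4 u5 ⊢
  linear_combination h6/2 + (2*dd a b/2)*u1 - (2*dd a c/2)*u2 + (I*dd a j/2)*u3
    - (I*dd a i/2)*u4 + (-I*dd a k/2)*u5

lemma htB (a b c i j k : Fin n) :
    Matrix.trace (gam n a * gam n b * gam n c * (lamP n k * lamM n i * lamM n j)) =
    ((2*dd a b) * (((I*dd c k)*0 - (-I*dd c i)*(dd k j*2^n/2) + (-I*dd c j)*(dd k i*2^n/2))/2)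
     - (2*dd a c) * (((I*dd b k)*0 - (-I*dd b i)*(dd k j*2^n/2) + (-I*dd b j)*(dd k i*2^n/2))/2)
     + (I*dd a k) * (((2*dd b c)*0 - (-I*dd b i)*(-I*dd c j*2^n/2) + (-I*dd b j)*(-I*dd c i*2^n/2))/2)
     - (-I*dd a i) * (((2*dd b c)*(dd k j*2^n/2) - (I*dd b k)*(-I*dd c j*2^n/2) + (-I*dd b j)*(I*dd c k*2^n/2))/2)
     + (-I*dd a j) * (((2*dd b c)*(dd k i*2^n/2) - (I*dd b k)*(-I*dd c i*2^n/2) + (-I*dd b i)*(I*dd c k*2^n/2))/2))/2 := by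
  have u1 : Matrix.trace (gam n c * lamP n k * lamM n i * lamM n j)
      = ((I*dd c k)*0 - (-I*dd c i)*(dd k j*2^n/2) + (-I*dd c j)*(dd k i*2^n/2))/2 := by
    linear_combination (tr4 _ _ _ _ _ _ _ (G2 c k) (G3 c i) (G3 c j))/2
      + (I*dd c k/2)*(vQQ i j) - (-I*dd c i/2)*(vPQ k j) + (-I*dd c j/2)*(vPQ k i)
  have u2 : Matrix.trace (gam n b * lamP n k * lamM n i * lamM n j)
      = ((I*dd b k)*0 - (-I*dd b i)*(dd k j*2^n/2) + (-I*dd b j)*(dd k i*2^n/2))/2 := by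
    linear_combination (tr4 _ _ _ _ _ _ _ (G2 b k) (G3 b i) (G3 b j))/2
      + (I*dd b k/2)*(vQQ i j) - (-I*dd b i/2)*(vPQ k j) + (-I*dd b j/2)*(vPQ k i)
  have u3 : Matrix.trace (gam n b * gam n c * lamM n i * lamM n j)
      = ((2*dd b c)*0 - (-I*dd b i)*(-I*dd c j*2^n/2) + (-I*dd b j)*(-I*dd c i*2^n/2))/2 := by
    linear_combination (tr4 _ _ _ _ _ _ _ (G1 b c) (G3 b i) (G3 b j))/2
      + (2*dd b c/2)*(vQQ i j) - (-I*dd b i/2)*(vGQ c j) + (-I*dd b j/2)*(vGQ c i)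
  have u4 : Matrix.trace (gam n b * gam n c * lamP n k * lamM n j)
      = ((2*dd b c)*(dd k j*2^n/2) - (I*dd b k)*(-I*dd c j*2^n/2) + (-I*dd b j)*(I*dd c k*2^n/2))/2 := by
    linear_combination (tr4 _ _ _ _ _ _ _ (G1 b c) (G2 b k) (G3 b j))/2
      + (2*dd b c/2)*(vPQ k j) - (I*dd b k/2)*(vGQ c j) + (-I*dd b j/2)*(vGP c k)
  have u5 : Matrix.trace (gam n b * gam n c * lamP n k * lamM n i)
      = ((2*dd b c)*(dd k i*2^n/2) - (I*dd b k)*(-I*dd c i*2^n/2) + (-I*dd b i)*(I*dd c k*2^n/2))/2 := by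
    linear_combination (tr4 _ _ _ _ _ _ _ (G1 b c) (G2 b k) (G3 b i))/2
      + (2*dd b c/2)*(vPQ k i) - (I*dd b k/2)*(vGQ c i) + (-I*dd b i/2)*(vGP c k)
  have h6 := tr6 (gam n a) (gam n b) (gam n c) (lamP n k) (lamM n i) (lamM n j)
    _ _ _ _ _ (G1 a b) (G1 a c) (G2 a k) (G3 a i) (G3 a j)
  simp only [Matrix.mul_assoc] at h6 u1 u2 u3 u4 u5 ⊢
  linear_combination h6/2 + (2*dd a b/2)*u1 - (2*dd a c/2)*u2 + (I*dd a k/2)*u3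
    - (-I*dd a i/2)*u4 + (-I*dd a j/2)*u5

end Car4


namespace Car5
open Car Car2 Car3 Car4
variable {n : ℕ}

lemma conA (x y z : Fin n) (f : Fin n → Fin n → Fin n → ℂ) :
    (∑ i, ∑ j, ∑ k, dd x i * (dd y j * (dd z k * f i j k))) = f x y z := by
  simp [dd, ite_mul, ← Finset.mul_sum, Finset.sum_ite_eq]

end Car5

open Car Car2 Car3 Car4 Car5

theorem stmt14 (n : ℕ) (T : Fin n → Fin n → Fin n → ℝ)
    (hT : ∀ i j k, T i j k = -T j i k) (a b c : Fin n) :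
    Matrix.trace (gam n a * gam n b * gam n c *
      ((1 / 2 : ℂ) • ∑ i, ∑ j, ∑ k, (T i j k : ℂ) •
        (lamP n j * lamP n i * lamM n k + lamP n k * lamM n i * lamM n j)))
      = Complex.I * 2 ^ (n - 2) * ((T a b c : ℂ) + (T c a b : ℂ) + (T b c a : ℂ)) := by
  have hsplit : Matrix.trace (gam n a * gam n b * gam n c *
      ((1 / 2 : ℂ) • ∑ i, ∑ j, ∑ k, (T i j k : ℂ) •
        (lamP n j * lamP n i * lamM n k + lamP n k * lamM n i * lamM n j)))
      = (1/2 : ℂ) * ∑ i, ∑ j, ∑ k, (T i j k : ℂ) *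
          (Matrix.trace (gam n a * gam n b * gam n c * (lamP n j * lamP n i * lamM n k))
           + Matrix.trace (gam n a * gam n b * gam n c * (lamP n k * lamM n i * lamM n j))) := by
    rw [Matrix.mul_smul, Matrix.trace_smul, smul_eq_mul]
    congr 1
    rw [Matrix.mul_sum, Matrix.trace_sum]
    refine Finset.sum_congr rfl fun i _ => ?_
    rw [Matrix.mul_sum, Matrix.trace_sum]
    refine Finset.sum_congr rfl fun j _ => ?_
    rw [Matrix.mul_sum, Matrix.trace_sum]
    refine Finset.sum_congr rfl fun k _ => ?_
    rw [Matrix.mul_smul, Matrix.trace_smul, smul_eq_mul, Matrix.mul_add, Matrix.trace_add]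
  rw [hsplit]
  have hstep2 : (∑ i, ∑ j, ∑ k, (T i j k : ℂ) *
          (Matrix.trace (gam n a * gam n b * gam n c * (lamP n j * lamP n i * lamM n k))
           + Matrix.trace (gam n a * gam n b * gam n c * (lamP n k * lamM n i * lamM n j))))
      = ∑ i, ∑ j, ∑ k, (
        dd b i * (dd a j * (dd c k * (-((2:ℂ)^n/4) * Complex.I * (T i j k : ℂ))))
      + dd c i * (dd a j * (dd b k * (((2:ℂ)^n/4) * Complex.I * (T i j k : ℂ))))
      + dd a i * (dd b j * (dd c k * (((2:ℂ)^n/4) * Complex.I * (T i j k : ℂ))))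
      + dd a i * (dd c j * (dd b k * (-((2:ℂ)^n/4) * Complex.I * (T i j k : ℂ))))
      + dd c i * (dd b j * (dd a k * (-((2:ℂ)^n/4) * Complex.I * (T i j k : ℂ))))
      + dd b i * (dd c j * (dd a k * (((2:ℂ)^n/4) * Complex.I * (T i j k : ℂ))))) := by
    refine Finset.sum_congr rfl fun i _ => Finset.sum_congr rfl fun j _ =>
      Finset.sum_congr rfl fun k _ => ?_
    rw [htA, htB, dd_comm k j, dd_comm k i]
    linear_combination (Complex.I * ((T i j k : ℂ) * 2^n *
      (-(1:ℂ)/4 * (dd c j * dd b i * dd a k) + (1/4) * (dd c j * dd b k * dd a i)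
       + (1/4) * (dd c i * dd b j * dd a k) - (1/4) * (dd c i * dd b k * dd a j)
       - (1/4) * (dd c k * dd b j * dd a i) + (1/4) * (dd c k * dd b i * dd a j)))) * Complex.I_sq
  rw [hstep2]
  simp only [Finset.sum_add_distrib]
  rw [conA, conA, conA, conA, conA, conA]
  by_cases hn : 2 ≤ n
  · have hpow : (2:ℂ)^n = 2^(n-2) * 4 := by
      conv_lhs => rw [← Nat.sub_add_cancel hn]
      rw [pow_add]
      norm_num
    have h1 : (T b a c : ℂ) = -(T a b c : ℂ) := by
      rw [hT b a c]; push_cast; ring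
    have h2 : (T a c b : ℂ) = -(T c a b : ℂ) := by
      rw [hT a c b]; push_cast; ring
    have h3 : (T c b a : ℂ) = -(T b c a : ℂ) := by
      rw [hT c b a]; push_cast; ring
    rw [hpow, h1, h2, h3]
    ring
  · have hall : ∀ x y : Fin n, x = y := by
      intro x y
      have hx := x.isLt
      have hy := y.isLt
      exact Fin.ext (by omega)
    rw [hall b a, hall c a]
    have hz : (T a a a : ℂ) = 0 := by
      have h0 := hT a a a
      have : T a a a = 0 := by linarith
      exact_mod_cast this
    rw [hz]
    ring
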